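/- arXiv:2206.08873 — 2 statements merged into one kernel-verified Lean document; each statement's English description precedes it below -/
import Mathlib

section
/- Relative smoothness of squared MMD with respect to negative entropy: let k be a bounded positive semi-definite kernel on X with c_k = sup_x k(x,x) < ∞, and for probability measures μ, ν define MMD²(μ,ν) = ∬ k d(μ−ν)d(μ−ν). Then for all probability measures μ, ν: ⟨∇MMD²(μ,ν★) − ∇MMD²(ν,ν★), μ − ν⟩ = 2∬k d(μ−ν)d(μ−ν) ≤ 2c_k·‖μ−ν‖²_TV ≤ 4c_k·(KL(μ|ν) + KL(ν|μ)); hence MMD²(·,ν★) is 4c_k-smooth relative to the negative entropy. -/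
open MeasureTheory ProbabilityTheory Real

/- The Kullback--Leibler divergence. -/
open Classical in
noncomputable def klDiv {α : Type*} [MeasurableSpace α] (μ ν : Measure α) : EReal :=
  if μ ≪ ν ∧ Integrable (llr μ ν) μ then ((∫ x, llr μ ν x ∂μ : ℝ) : EReal) else ⊤

/- Total variation distance between two finite measures. -/
noncomputable def tvDist {α : Type*} [MeasurableSpace α]
    (μ ν : Measure α) [IsFiniteMeasure μ] [IsFiniteMeasure ν] : ℝ :=
  ((μ.toSignedMeasure - ν.toSignedMeasure).totalVariation Set.univ).toReal

/-- logarithmic-mean/arithmetic-mean type inequality. -/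
lemma mmd_key_ineq (t : ℝ) (ht : 0 < t) :
    (t - 1) ^ 2 ≤ (t - 1) * Real.log t * ((t + 1) / 2) := by
  have hder : ∀ x : ℝ, 0 < x → HasDerivAt (fun t : ℝ => (t + 1) * Real.log t - 2 * (t - 1))
      (1 * Real.log x + (x + 1) * x⁻¹ - 2 * 1) x := by
    intro x hx
    exact (((hasDerivAt_id x).add_const 1).mul (Real.hasDerivAt_log hx.ne')).sub
      (((hasDerivAt_id x).sub_const 1).const_mul 2)
  have hmono : MonotoneOn (fun t : ℝ => (t + 1) * Real.log t - 2 * (t - 1)) (Set.Ioi 0) := by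
    apply monotoneOn_of_deriv_nonneg (convex_Ioi 0)
    · exact ((continuousOn_id.add continuousOn_const).mul
        (Real.continuousOn_log.mono (by intro x hx; exact ne_of_gt hx))).sub
        (continuousOn_const.mul (continuousOn_id.sub continuousOn_const))
    · rw [interior_Ioi]
      intro x hx
      exact (hder x hx).differentiableAt.differentiableWithinAt
    · rw [interior_Ioi]
      intro x hx
      rw [(hder x hx).deriv]
      have h1 : Real.log x⁻¹ ≤ x⁻¹ - 1 := Real.log_le_sub_one_of_pos (inv_pos.mpr hx)
      rw [Real.log_inv] at h1
      have hx0 : x ≠ 0 := hx.ne'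
      have : (x + 1) * x⁻¹ = 1 + x⁻¹ := by field_simp
      rw [this]
      linarith
  have hphi1 : (fun t : ℝ => (t + 1) * Real.log t - 2 * (t - 1)) 1 = 0 := by simp
  rcases le_total 1 t with h | h
  · have h2 := hmono (Set.mem_Ioi.mpr one_pos) (Set.mem_Ioi.mpr ht) h
    rw [hphi1] at h2
    simp only at h2
    have h3 := mul_le_mul_of_nonneg_left h2 (show (0:ℝ) ≤ t - 1 by linarith)
    nlinarith
  · have h2 := hmono (Set.mem_Ioi.mpr ht) (Set.mem_Ioi.mpr one_pos) h
    rw [hphi1] at h2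
    simp only at h2
    have h3 := mul_le_mul_of_nonneg_left h2 (show (0:ℝ) ≤ 1 - t by linarith)
    nlinarith


set_option maxHeartbeats 1000000

/-- Relative smoothness of the squared MMD w.r.t. the negative entropy: for a
bounded measurable symmetric positive semi-definite kernel `k` with `k(x,x) ≤ c_k`, and
probability measures `μ, ν`, the monotonicity bracket of the first variation
`∇MMD²(·, νs)(x) = 2(∫k(·,x)dμ − ∫k(·,x)dνs)` satisfies
`⟨∇MMD²(μ,νs) − ∇MMD²(ν,νs), μ − ν⟩ = 2∬k d(μ−ν)d(μ−ν) ≤ 2c_k·‖μ−ν‖²_TV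
≤ 4c_k·(KL(μ|ν) + KL(ν|μ))`; hence `MMD²(·,νs)` is `4c_k`-smooth relative to the negative
entropy. -/
theorem mmd_relatively_smooth_wrt_entropy
    {X : Type*} [MeasurableSpace X]
    (k : X → X → ℝ) (hk_meas : Measurable (Function.uncurry k))
    (hk_symm : ∀ x y, k x y = k y x)
    (hk_psd : ∀ (n : ℕ) (x : Fin n → X) (a : Fin n → ℝ),
      0 ≤ ∑ i, ∑ j, a i * a j * k (x i) (x j))
    (ck : ℝ) (hck : ∀ x, k x x ≤ ck)
    (νs μ ν : Measure X)
    [IsProbabilityMeasure νs] [IsProbabilityMeasure μ] [IsProbabilityMeasure ν] :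
    ((∫ x, 2 * ((∫ y, k y x ∂μ) - (∫ y, k y x ∂ν)) ∂μ)
        - (∫ x, 2 * ((∫ y, k y x ∂μ) - (∫ y, k y x ∂ν)) ∂ν)
      = 2 * ((∫ x, ∫ y, k x y ∂μ ∂μ) - (∫ x, ∫ y, k x y ∂ν ∂μ)
          - ((∫ x, ∫ y, k x y ∂μ ∂ν) - (∫ x, ∫ y, k x y ∂ν ∂ν)))) ∧
    (2 * ((∫ x, ∫ y, k x y ∂μ ∂μ) - (∫ x, ∫ y, k x y ∂ν ∂μ)
          - ((∫ x, ∫ y, k x y ∂μ ∂ν) - (∫ x, ∫ y, k x y ∂ν ∂ν)))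
      ≤ 2 * ck * (tvDist μ ν) ^ 2) ∧
    (((2 * ck * (tvDist μ ν) ^ 2 : ℝ) : EReal)
      ≤ ((4 * ck : ℝ) : EReal) * (klDiv μ ν + klDiv ν μ)) := by
  -- ## kernel bounds
  have hX : Nonempty X := by
    by_contra h
    rw [not_nonempty_iff] at h
    have h1 := measure_univ (μ := μ)
    rw [Set.univ_eq_empty_iff.mpr h, measure_empty] at h1
    exact zero_ne_one h1
  obtain ⟨x₀⟩ := hX
  have hdiag : ∀ x, 0 ≤ k x x := by
    intro x
    have := hk_psd 1 ![x] ![1]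
    simpa [Fin.sum_univ_one] using this
  have hck0 : 0 ≤ ck := le_trans (hdiag x₀) (hck x₀)
  have hkb : ∀ x y, |k x y| ≤ ck := by
    intro x y
    have h1 := hk_psd 2 ![x, y] ![1, 1]
    have h2 := hk_psd 2 ![x, y] ![1, -1]
    simp [Fin.sum_univ_two, hk_symm y x] at h1 h2
    have := hck x; have := hck y
    rw [abs_le]
    constructor <;> nlinarith
  -- ## general integrability
  have hInt : ∀ (m : Measure X) [IsFiniteMeasure m] (g : X → ℝ) (C : ℝ), Measurable g →
      (∀ x, |g x| ≤ C) → Integrable g m := by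
    intro m _ g C hg hb
    exact Integrable.mono' (integrable_const C) hg.aestronglyMeasurable
      (ae_of_all _ fun x => by simpa [Real.norm_eq_abs] using hb x)
  have hkxm : ∀ x, Measurable (k x) := fun x => hk_meas.of_uncurry_left
  have hg1m : ∀ (m : Measure X) [SFinite m], Measurable (fun x => ∫ y, k x y ∂m) := by
    intro m _
    exact hk_meas.stronglyMeasurable.integral_prod_right'.measurable
  have hg1b : ∀ (m : Measure X) [IsProbabilityMeasure m] (x : X), |∫ y, k x y ∂m| ≤ ck := by
    intro m _ x
    have := norm_integral_le_of_norm_le_const (μ := m) (f := k x) (C := ck)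
      (ae_of_all _ fun y => by simpa [Real.norm_eq_abs] using hkb x y)
    simpa [Real.norm_eq_abs] using this
  have hiμμ : Integrable (fun x => ∫ y, k x y ∂μ) μ := hInt μ _ ck (hg1m μ) (hg1b μ)
  have hiνμ : Integrable (fun x => ∫ y, k x y ∂ν) μ := hInt μ _ ck (hg1m ν) (hg1b ν)
  have hiμν : Integrable (fun x => ∫ y, k x y ∂μ) ν := hInt ν _ ck (hg1m μ) (hg1b μ)
  have hiνν : Integrable (fun x => ∫ y, k x y ∂ν) ν := hInt ν _ ck (hg1m ν) (hg1b ν)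
  -- ## Jordan/Hahn decomposition setup
  set s : SignedMeasure X := μ.toSignedMeasure - ν.toSignedMeasure with hs_def
  obtain ⟨i, hi₁, hi₂, hi₃, hp, hq⟩ := s.toJordanDecomposition_spec
  have sA : ∀ A : Set X, MeasurableSet A → s A = (μ A).toReal - (ν A).toReal := by
    intro A hA
    rw [hs_def, Measure.toSignedMeasure_sub_apply hA]; rfl
  have hle_i : ν.restrict i ≤ μ.restrict i := by
    rw [Measure.le_iff]
    intro t ht
    rw [Measure.restrict_apply ht, Measure.restrict_apply ht]
    have h0 : 0 ≤ s (t ∩ i) :=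
      s.nonneg_of_zero_le_restrict
        (s.zero_le_restrict_subset hi₁ Set.inter_subset_right hi₂)
    rw [sA _ (ht.inter hi₁)] at h0
    exact (ENNReal.toReal_le_toReal (measure_ne_top _ _) (measure_ne_top _ _)).mp (by linarith)
  have hle_ic : μ.restrict iᶜ ≤ ν.restrict iᶜ := by
    rw [Measure.le_iff]
    intro t ht
    rw [Measure.restrict_apply ht, Measure.restrict_apply ht]
    have h0 : s (t ∩ iᶜ) ≤ 0 :=
      s.nonpos_of_restrict_le_zero
        (s.restrict_le_zero_subset hi₁.compl Set.inter_subset_right hi₃)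
    rw [sA _ (ht.inter hi₁.compl)] at h0
    exact (ENNReal.toReal_le_toReal (measure_ne_top _ _) (measure_ne_top _ _)).mp (by linarith)
  set ρ₁ : Measure X := μ.restrict i - ν.restrict i with hρ₁
  set ρ₂ : Measure X := ν.restrict iᶜ - μ.restrict iᶜ with hρ₂
  haveI : IsFiniteMeasure ρ₁ := Measure.isFiniteMeasure_sub
  haveI : IsFiniteMeasure ρ₂ := Measure.isFiniteMeasure_sub
  have hdecomp : μ + ρ₂ = ν + ρ₁ := by
    have h1 : μ = μ.restrict i + μ.restrict iᶜ := (Measure.restrict_add_restrict_compl hi₁).symm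
    have h2 : ν = ν.restrict i + ν.restrict iᶜ := (Measure.restrict_add_restrict_compl hi₁).symm
    have c1 : ρ₂ + μ.restrict iᶜ = ν.restrict iᶜ := Measure.sub_add_cancel_of_le hle_ic
    have c2 : ρ₁ + ν.restrict i = μ.restrict i := Measure.sub_add_cancel_of_le hle_i
    calc μ + ρ₂ = (μ.restrict i + μ.restrict iᶜ) + ρ₂ := by rw [← h1]
    _ = μ.restrict i + (ρ₂ + μ.restrict iᶜ) := by abel
    _ = (ρ₁ + ν.restrict i) + ν.restrict iᶜ := by rw [c1, ← c2]
    _ = (ν.restrict i + ν.restrict iᶜ) + ρ₁ := by abel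
    _ = ν + ρ₁ := by rw [← h2]
  set P : ℝ := (ρ₁ Set.univ).toReal with hPdef
  set Q : ℝ := (ρ₂ Set.univ).toReal with hQdef
  have hP0 : 0 ≤ P := ENNReal.toReal_nonneg
  have hQ0 : 0 ≤ Q := ENNReal.toReal_nonneg
  have hP : P = s i := by
    rw [hPdef, hρ₁, Measure.sub_apply MeasurableSet.univ hle_i,
      Measure.restrict_apply_univ, Measure.restrict_apply_univ,
      ENNReal.toReal_sub_of_le ?hle (measure_ne_top _ _), sA i hi₁]
    case hle =>
      simpa [Measure.restrict_apply_univ] using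
        (Measure.le_iff.mp hle_i) Set.univ MeasurableSet.univ
  have hQ : Q = -s iᶜ := by
    rw [hQdef, hρ₂, Measure.sub_apply MeasurableSet.univ hle_ic,
      Measure.restrict_apply_univ, Measure.restrict_apply_univ,
      ENNReal.toReal_sub_of_le ?hle2 (measure_ne_top _ _), sA iᶜ hi₁.compl]
    · ring
    case hle2 =>
      simpa [Measure.restrict_apply_univ] using
        (Measure.le_iff.mp hle_ic) Set.univ MeasurableSet.univ
  have htv : tvDist μ ν = P + Q := by
    rw [tvDist, hP, hQ]
    rw [show (μ.toSignedMeasure - ν.toSignedMeasure) = s from rfl]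
    rw [SignedMeasure.totalVariation, Measure.add_apply,
      ENNReal.toReal_add (measure_ne_top _ _) (measure_ne_top _ _), hp, hq,
      SignedMeasure.toMeasureOfZeroLE_apply _ hi₂ hi₁ MeasurableSet.univ,
      SignedMeasure.toMeasureOfLEZero_apply _ hi₃ hi₁.compl MeasurableSet.univ]
    simp [Set.inter_univ]
  have htv0 : 0 ≤ tvDist μ ν := ENNReal.toReal_nonneg
  -- ## integral transfer
  have hkey : ∀ (g : X → ℝ) (C : ℝ), Measurable g → (∀ x, |g x| ≤ C) →
      ∫ x, g x ∂μ - ∫ x, g x ∂ν = ∫ x, g x ∂ρ₁ - ∫ x, g x ∂ρ₂ := by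
    intro g C hg hb
    have h1 : ∫ x, g x ∂(μ + ρ₂) = ∫ x, g x ∂(ν + ρ₁) := by rw [hdecomp]
    rw [integral_add_measure (hInt μ _ C hg hb) (hInt ρ₂ _ C hg hb),
        integral_add_measure (hInt ν _ C hg hb) (hInt ρ₁ _ C hg hb)] at h1
    linarith
  -- ## Part 1
  have hswap : ∀ (m : Measure X) (x : X), ∫ y, k y x ∂m = ∫ y, k x y ∂m :=
    fun m x => integral_congr_ae (ae_of_all _ fun y => hk_symm y x)
  have part1 : (∫ x, 2 * ((∫ y, k y x ∂μ) - (∫ y, k y x ∂ν)) ∂μ)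
        - (∫ x, 2 * ((∫ y, k y x ∂μ) - (∫ y, k y x ∂ν)) ∂ν)
      = 2 * ((∫ x, ∫ y, k x y ∂μ ∂μ) - (∫ x, ∫ y, k x y ∂ν ∂μ)
          - ((∫ x, ∫ y, k x y ∂μ ∂ν) - (∫ x, ∫ y, k x y ∂ν ∂ν))) := by
    simp_rw [hswap]
    rw [integral_const_mul, integral_const_mul, integral_sub hiμμ hiνμ, integral_sub hiμν hiνν]
    ring
  -- ## Part 2
  have part2 : 2 * ((∫ x, ∫ y, k x y ∂μ ∂μ) - (∫ x, ∫ y, k x y ∂ν ∂μ)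
          - ((∫ x, ∫ y, k x y ∂μ ∂ν) - (∫ x, ∫ y, k x y ∂ν ∂ν)))
      ≤ 2 * ck * (tvDist μ ν) ^ 2 := by
    set g : X → ℝ := fun x => (∫ y, k x y ∂μ) - (∫ y, k x y ∂ν) with hg_def
    have hgm : Measurable g := (hg1m μ).sub (hg1m ν)
    have hgb : ∀ x, |g x| ≤ 2 * ck := by
      intro x
      calc |g x| ≤ |∫ y, k x y ∂μ| + |∫ y, k x y ∂ν| := abs_sub _ _
      _ ≤ ck + ck := add_le_add (hg1b μ x) (hg1b ν x)
      _ = 2 * ck := by ring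
    have hg_eq : ∀ x, g x = (∫ y, k x y ∂ρ₁) - (∫ y, k x y ∂ρ₂) :=
      fun x => hkey (k x) ck (hkxm x) (fun y => hkb x y)
    have hg_bd : ∀ x, |g x| ≤ ck * P + ck * Q := by
      intro x
      rw [hg_eq x]
      have b1 : |∫ y, k x y ∂ρ₁| ≤ ck * P := by
        have := norm_integral_le_of_norm_le_const (μ := ρ₁) (f := k x) (C := ck)
          (ae_of_all _ fun y => by simpa [Real.norm_eq_abs] using hkb x y)
        simpa [Real.norm_eq_abs, hPdef, measureReal_def] using this
      have b2 : |∫ y, k x y ∂ρ₂| ≤ ck * Q := by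
        have := norm_integral_le_of_norm_le_const (μ := ρ₂) (f := k x) (C := ck)
          (ae_of_all _ fun y => by simpa [Real.norm_eq_abs] using hkb x y)
        simpa [Real.norm_eq_abs, hQdef, measureReal_def] using this
      calc |∫ y, k x y ∂ρ₁ - ∫ y, k x y ∂ρ₂| ≤ |∫ y, k x y ∂ρ₁| + |∫ y, k x y ∂ρ₂| :=
        abs_sub _ _
      _ ≤ ck * P + ck * Q := add_le_add b1 b2
    have hD : (∫ x, ∫ y, k x y ∂μ ∂μ) - (∫ x, ∫ y, k x y ∂ν ∂μ)
          - ((∫ x, ∫ y, k x y ∂μ ∂ν) - (∫ x, ∫ y, k x y ∂ν ∂ν))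
        = ∫ x, g x ∂ρ₁ - ∫ x, g x ∂ρ₂ := by
      rw [← integral_sub hiμμ hiνμ, ← integral_sub hiμν hiνν]
      exact hkey g (2 * ck) hgm hgb
    have b1 : |∫ x, g x ∂ρ₁| ≤ (ck * P + ck * Q) * P := by
      have := norm_integral_le_of_norm_le_const (μ := ρ₁) (f := g) (C := ck * P + ck * Q)
        (ae_of_all _ fun x => by simpa [Real.norm_eq_abs] using hg_bd x)
      simpa [Real.norm_eq_abs, hPdef, measureReal_def] using this
    have b2 : |∫ x, g x ∂ρ₂| ≤ (ck * P + ck * Q) * Q := by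
      have := norm_integral_le_of_norm_le_const (μ := ρ₂) (f := g) (C := ck * P + ck * Q)
        (ae_of_all _ fun x => by simpa [Real.norm_eq_abs] using hg_bd x)
      simpa [Real.norm_eq_abs, hQdef, measureReal_def] using this
    rw [hD, htv]
    have c1 := (abs_le.mp b1).2
    have c2 := (abs_le.mp b2).1
    nlinarith
  refine ⟨part1, part2, ?_⟩
  -- ## Part 3
  rcases eq_or_lt_of_le hck0 with hck_eq | hck_pos
  · subst hck_eq
    simp
  by_cases h1 : μ ≪ ν ∧ Integrable (llr μ ν) μ
  swap
  · have e1 : klDiv μ ν = ⊤ := by rw [klDiv, if_neg h1]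
    have e2 : klDiv ν μ ≠ ⊥ := by
      rw [klDiv]; split_ifs <;> simp
    rw [e1, EReal.top_add_of_ne_bot e2, EReal.mul_top_of_pos
      (by exact_mod_cast (by linarith : (0:ℝ) < 4 * ck))]
    exact le_top
  by_cases h2 : ν ≪ μ ∧ Integrable (llr ν μ) ν
  swap
  · have e1 : klDiv ν μ = ⊤ := by rw [klDiv, if_neg h2]
    have e2 : klDiv μ ν ≠ ⊥ := by
      rw [klDiv]; split_ifs <;> simp
    rw [e1, EReal.add_top_of_ne_bot e2, EReal.mul_top_of_pos
      (by exact_mod_cast (by linarith : (0:ℝ) < 4 * ck))]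
    exact le_top
  -- both KL divergences are finite
  obtain ⟨hμν, hμν_int⟩ := h1
  obtain ⟨hνμ, hνμ_int⟩ := h2
  have e1 : klDiv μ ν = ((∫ x, llr μ ν x ∂μ : ℝ) : EReal) := by
    rw [klDiv, if_pos ⟨hμν, hμν_int⟩]
  have e2 : klDiv ν μ = ((∫ x, llr ν μ x ∂ν : ℝ) : EReal) := by
    rw [klDiv, if_pos ⟨hνμ, hνμ_int⟩]
  set f : X → ℝ := fun x => (μ.rnDeriv ν x).toReal with hf_def
  have hf_meas : Measurable f := (Measure.measurable_rnDeriv μ ν).ennreal_toReal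
  have hf_nonneg : ∀ x, 0 ≤ f x := fun x => ENNReal.toReal_nonneg
  have hf_int : Integrable f ν := Measure.integrable_toReal_rnDeriv
  have hf_one : ∫ x, f x ∂ν = 1 := by
    rw [hf_def]
    rw [Measure.integral_toReal_rnDeriv hμν]
    simp
  have hpos : ∀ᵐ x ∂ν, 0 < f x := by
    filter_upwards [hνμ.ae_le (Measure.rnDeriv_pos hμν), Measure.rnDeriv_lt_top μ ν]
      with x h1x h2x
    exact ENNReal.toReal_pos h1x.ne' h2x.ne
  -- identify the two KL integrals
  have ha_eq : ∫ x, llr μ ν x ∂μ = ∫ x, f x * Real.log (f x) ∂ν := by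
    rw [← MeasureTheory.integral_rnDeriv_smul hμν (f := llr μ ν)]
    simp [llr_def, smul_eq_mul, hf_def]
  have hb_ae : llr ν μ =ᵐ[ν] fun x => - Real.log (f x) := by
    filter_upwards [(Measure.inv_rnDeriv hμν).filter_mono hνμ.ae_le] with x hx
    rw [llr_def]
    simp only
    rw [← hx]
    simp only [Pi.inv_apply, ENNReal.toReal_inv, Real.log_inv, hf_def]
  have hb_eq : ∫ x, llr ν μ x ∂ν = - ∫ x, Real.log (f x) ∂ν := by
    rw [integral_congr_ae hb_ae, integral_neg]
  have hlog_int : Integrable (fun x => Real.log (f x)) ν := by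
    have h := (hνμ_int.congr hb_ae).neg
    exact h.congr (ae_of_all _ fun x => by simp)
  have hflog_int : Integrable (fun x => f x * Real.log (f x)) ν := by
    have := (MeasureTheory.integrable_rnDeriv_smul_iff hμν).mpr hμν_int
    simpa [llr_def, smul_eq_mul, hf_def] using this
  set A : ℝ := ∫ x, (f x - 1) * Real.log (f x) ∂ν with hA_def
  have hA_eq : ∫ x, llr μ ν x ∂μ + ∫ x, llr ν μ x ∂ν = A := by
    rw [ha_eq, hb_eq, hA_def, ← sub_eq_add_neg, ← integral_sub hflog_int hlog_int]
    congr 1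
    ext x
    ring
  have hpt : ∀ t : ℝ, 0 ≤ t → 0 ≤ (t - 1) * Real.log t := by
    intro t ht
    rcases le_total 1 t with h | h
    · exact mul_nonneg (by linarith) (Real.log_nonneg h)
    · nlinarith [Real.log_nonpos ht h]
  have hA_nonneg : 0 ≤ A :=
    integral_nonneg fun x => hpt (f x) (hf_nonneg x)
  -- tv ≤ ∫ |f - 1|
  have hf1_int : Integrable (fun x => f x - 1) ν := hf_int.sub (integrable_const 1)
  have habs_int : Integrable (fun x => |f x - 1|) ν := hf1_int.abs
  have hsA' : ∀ B : Set X, MeasurableSet B → s B = ∫ x in B, (f x - 1) ∂ν := by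
    intro B hB
    rw [sA B hB, ← measureReal_def, ← Measure.setIntegral_toReal_rnDeriv hμν B,
      integral_sub hf_int.integrableOn (integrable_const 1).integrableOn]
    simp [hf_def, measureReal_def]
  have htv_le : tvDist μ ν ≤ ∫ x, |f x - 1| ∂ν := by
    rw [htv, hP, hQ, hsA' i hi₁, hsA' iᶜ hi₁.compl]
    have l1 : ∫ x in i, (f x - 1) ∂ν ≤ ∫ x in i, |f x - 1| ∂ν :=
      integral_mono hf1_int.integrableOn habs_int.integrableOn fun x => le_abs_self _
    have l2 : - ∫ x in iᶜ, (f x - 1) ∂ν ≤ ∫ x in iᶜ, |f x - 1| ∂ν := by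
      have h4 := norm_integral_le_integral_norm (f := fun x => f x - 1) (μ := ν.restrict iᶜ)
      simp only [Real.norm_eq_abs] at h4
      have h3 := neg_le_abs (∫ x in iᶜ, (f x - 1) ∂ν)
      linarith
    have l3 : ∫ x in i, |f x - 1| ∂ν + ∫ x in iᶜ, |f x - 1| ∂ν = ∫ x, |f x - 1| ∂ν :=
      integral_add_compl hi₁ habs_int
    linarith
  -- Cauchy-Schwarz
  set u : X → ℝ := fun x => Real.sqrt ((f x - 1) * Real.log (f x)) with hu_def
  set v : X → ℝ := fun x => Real.sqrt ((f x + 1) / 2) with hv_def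
  have hu_meas : Measurable u :=
    ((hf_meas.sub measurable_const).mul (Real.measurable_log.comp hf_meas)).sqrt
  have hv_meas : Measurable v := ((hf_meas.add measurable_const).div_const 2).sqrt
  have hu_sq : ∀ x, u x ^ 2 = (f x - 1) * Real.log (f x) :=
    fun x => Real.sq_sqrt (hpt (f x) (hf_nonneg x))
  have hv_sq : ∀ x, v x ^ 2 = (f x + 1) / 2 :=
    fun x => Real.sq_sqrt (by linarith [hf_nonneg x])
  have hu2_int : Integrable (fun x => u x ^ 2) ν := by
    have : Integrable (fun x => f x * Real.log (f x) - Real.log (f x)) ν :=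
      hflog_int.sub hlog_int
    refine this.congr (ae_of_all _ fun x => ?_)
    simp only
    rw [hu_sq x]; ring
  have hv2_int : Integrable (fun x => v x ^ 2) ν := by
    have : Integrable (fun x => (f x + 1) / 2) ν := (hf_int.add (integrable_const 1)).div_const 2
    exact this.congr (ae_of_all _ fun x => (hv_sq x).symm)
  have hu_mem : MemLp u (ENNReal.ofReal 2) ν := by
    rw [show ENNReal.ofReal 2 = 2 by norm_num]
    exact (memLp_two_iff_integrable_sq hu_meas.aestronglyMeasurable).mpr hu2_int
  have hv_mem : MemLp v (ENNReal.ofReal 2) ν := by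
    rw [show ENNReal.ofReal 2 = 2 by norm_num]
    exact (memLp_two_iff_integrable_sq hv_meas.aestronglyMeasurable).mpr hv2_int
  have hconj : Real.HolderConjugate 2 2 := Real.HolderConjugate.two_two
  have hCS := integral_mul_le_Lp_mul_Lq_of_nonneg hconj
    (ae_of_all _ fun x => Real.sqrt_nonneg _) (ae_of_all _ fun x => Real.sqrt_nonneg _)
    hu_mem hv_mem
  have hrpow2 : ∀ r : ℝ, r ^ (2:ℝ) = r ^ 2 := by
    intro r
    rw [← Real.rpow_natCast r 2]
    norm_num
  simp_rw [hrpow2] at hCS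
  have hIu : ∫ x, u x ^ 2 ∂ν = A := by
    rw [hA_def]
    exact integral_congr_ae (ae_of_all _ fun x => hu_sq x)
  have hIv : ∫ x, v x ^ 2 ∂ν = 1 := by
    have : ∫ x, v x ^ 2 ∂ν = ∫ x, (f x + 1) / 2 ∂ν :=
      integral_congr_ae (ae_of_all _ fun x => hv_sq x)
    rw [this, integral_div, integral_add hf_int (integrable_const 1), hf_one]
    simp
  rw [hIu, hIv] at hCS
  -- pointwise |f - 1| ≤ u * v
  have huv_int : Integrable (fun x => u x * v x) ν := by
    refine Integrable.mono' ((hu2_int.add hv2_int).div_const 2)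
      (hu_meas.mul hv_meas).aestronglyMeasurable (ae_of_all _ fun x => ?_)
    rw [Real.norm_eq_abs, abs_of_nonneg (mul_nonneg (Real.sqrt_nonneg _) (Real.sqrt_nonneg _))]
    simp only [Pi.add_apply]
    nlinarith [sq_nonneg (u x - v x)]
  have h_ptwise : ∀ᵐ x ∂ν, |f x - 1| ≤ u x * v x := by
    filter_upwards [hpos] with x hx
    have key := mmd_key_ineq (f x) hx
    have : u x * v x = Real.sqrt ((f x - 1) * Real.log (f x) * ((f x + 1) / 2)) := by
      rw [hu_def, hv_def]
      exact (Real.sqrt_mul (hpt (f x) (hf_nonneg x)) _).symm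
    rw [this, ← Real.sqrt_sq_eq_abs]
    exact Real.sqrt_le_sqrt key
  have habs_le : ∫ x, |f x - 1| ∂ν ≤ ∫ x, u x * v x ∂ν :=
    integral_mono_ae habs_int huv_int h_ptwise
  -- combine
  have hchain : tvDist μ ν ≤ A ^ ((1:ℝ)/2) := by
    calc tvDist μ ν ≤ ∫ x, |f x - 1| ∂ν := htv_le
    _ ≤ ∫ x, u x * v x ∂ν := habs_le
    _ ≤ A ^ ((1:ℝ)/2) * (1:ℝ) ^ ((1:ℝ)/2) := hCS
    _ = A ^ ((1:ℝ)/2) := by rw [Real.one_rpow, mul_one]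
  have htv_sq : tvDist μ ν ^ 2 ≤ A := by
    have h5 : tvDist μ ν ^ 2 ≤ (A ^ ((1:ℝ)/2)) ^ 2 := pow_le_pow_left₀ htv0 hchain 2
    have h6 : (A ^ ((1:ℝ)/2)) ^ 2 = A := by
      rw [← Real.rpow_natCast (A ^ ((1:ℝ)/2)) 2, ← Real.rpow_mul hA_nonneg]
      norm_num
    linarith
  rw [e1, e2, ← EReal.coe_add, ← EReal.coe_mul, EReal.coe_le_coe_iff, hA_eq]
  nlinarith
end

section
/- Optimal value and minimizer of the latent-EM objective: let K(x,dy) = k(x,y) ν★(dy) be a Markov kernel, T_K μ = ∫ μ(dx) K(x,·), and F(π) = KL(π | p_X π ⊗ K) for π ∈ Π(·, ν★) (couplings with second marginal ν★). Let μ★ minimize μ ↦ KL(ν★ | T_K μ) over probability measures on X and assume T_K μ★ ≫ ν★. Then π★(dx,dy) = μ★(dx) k(x,y) ν★(dy)/(T_K μ★)(dy) belongs to Π(·,ν★) and minimizes F over Π(·,ν★), with F(π★) = KL(ν★ | T_K μ★). -/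
open MeasureTheory ProbabilityTheory Real

set_option linter.unusedSectionVars false

section Aux

variable {X Y : Type*} [MeasurableSpace X] [MeasurableSpace Y]

/-- sandwich integrability -/
lemma em_integrable_of_bounds {α : Type*} [MeasurableSpace α] {μ : Measure α} [IsFiniteMeasure μ]
    {f g : α → ℝ} {C : ℝ} (hf : AEStronglyMeasurable f μ) (hg : Integrable g μ)
    (h1 : ∀ᵐ a ∂μ, C ≤ f a) (h2 : ∀ᵐ a ∂μ, f a ≤ g a) : Integrable f μ := by
  refine Integrable.mono' (g := fun a => |g a| + |C|) (hg.abs.add (integrable_const _)) hf ?_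
  filter_upwards [h1, h2] with a ha1 ha2
  rw [Real.norm_eq_abs, abs_le]
  constructor
  · have : -(|g a| + |C|) ≤ -|C| := by nlinarith [abs_nonneg (g a)]
    exact this.trans ((neg_abs_le C).trans ha1)
  · exact ha2.trans ((le_abs_self _).trans (by nlinarith [abs_nonneg C]))

variable {νs : Measure Y} [IsProbabilityMeasure νs]
  {k : X → Y → ℝ} {Mk : ℝ}

lemma em_measT (hk_meas : Measurable (Function.uncurry k)) (μ : Measure X) [SFinite μ] :
    Measurable (fun y => ∫⁻ x, ENNReal.ofReal (k x y) ∂μ) :=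
  Measurable.lintegral_prod_left (f := fun x y => ENNReal.ofReal (k x y))
    hk_meas.ennreal_ofReal

lemma em_Tpos (hk_meas : Measurable (Function.uncurry k)) (hk_pos : ∀ x y, 0 < k x y)
    (μ : Measure X) [IsProbabilityMeasure μ] (y : Y) :
    0 < ∫⁻ x, ENNReal.ofReal (k x y) ∂μ := by
  rw [lintegral_pos_iff_support]
  · have : Function.support (fun x => ENNReal.ofReal (k x y)) = Set.univ := by
      ext x; simp [Function.support, ENNReal.ofReal_eq_zero, not_le, hk_pos x y]
    rw [this]; simp
  · exact (hk_meas.comp (measurable_id.prodMk measurable_const)).ennreal_ofReal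

lemma em_Tle (hk_bdd : ∀ x y, k x y ≤ Mk) (μ : Measure X) [IsProbabilityMeasure μ] (y : Y) :
    ∫⁻ x, ENNReal.ofReal (k x y) ∂μ ≤ ENNReal.ofReal Mk := by
  calc ∫⁻ x, ENNReal.ofReal (k x y) ∂μ ≤ ∫⁻ _, ENNReal.ofReal Mk ∂μ :=
        lintegral_mono fun x => ENNReal.ofReal_le_ofReal (hk_bdd x y)
    _ = ENNReal.ofReal Mk := by simp

lemma em_TneTop (hk_bdd : ∀ x y, k x y ≤ Mk) (μ : Measure X) [IsProbabilityMeasure μ] (y : Y) :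
    ∫⁻ x, ENNReal.ofReal (k x y) ∂μ ≠ ⊤ :=
  ((em_Tle hk_bdd μ y).trans_lt ENNReal.ofReal_lt_top).ne


lemma em_indicator_aux {s : Set (X × Y)} (f : X × Y → ENNReal) (x : X) (y : Y) :
    s.indicator f (x, y) = (Prod.mk x ⁻¹' s).indicator (fun y' => f (x, y')) y := by
  by_cases h : (x, y) ∈ s <;> simp [Set.indicator, h]

/-- compProd with the kernel is a product with density. -/
lemma em_compProd (hk_meas : Measurable (Function.uncurry k))
    (κ : ProbabilityTheory.Kernel X Y) [IsMarkovKernel κ]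
    (hκ : ∀ x, κ x = νs.withDensity (fun y => ENNReal.ofReal (k x y)))
    (β : Measure X) [SFinite β] :
    β ⊗ₘ κ = (β.prod νs).withDensity (fun z => ENNReal.ofReal (k z.1 z.2)) := by
  ext s hs
  rw [Measure.compProd_apply hs, withDensity_apply _ hs]
  rw [← lintegral_indicator hs, lintegral_prod _ (((show Measurable (fun z : X × Y => ENNReal.ofReal (k z.1 z.2)) from
      hk_meas.ennreal_ofReal).indicator hs).aemeasurable)]
  refine lintegral_congr fun x => ?_
  rw [hκ x, withDensity_apply _ (measurable_prodMk_left hs), ← lintegral_indicator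
    (measurable_prodMk_left hs)]
  exact lintegral_congr fun y => (em_indicator_aux (s := s) (fun z => ENNReal.ofReal (k z.1 z.2)) x y).symm

/-- snd marginal of a product with density. -/
lemma em_snd {c : X × Y → ENNReal} (hcm : Measurable c)
    (β : Measure X) [SFinite β]
    (h : ∀ y, ∫⁻ x, c (x, y) ∂β = 1) :
    ((β.prod νs).withDensity c).snd = νs := by
  ext s hs
  rw [Measure.snd_apply hs, withDensity_apply _ (measurable_snd hs),
    ← lintegral_indicator (measurable_snd hs),
    lintegral_prod_symm _ (hcm.indicator (measurable_snd hs)).aemeasurable]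
  have : ∀ y, ∫⁻ x, (Prod.snd ⁻¹' s).indicator c (x, y) ∂β
      = s.indicator (fun _ => (1 : ENNReal)) y := by
    intro y
    by_cases hy : y ∈ s
    · rw [Set.indicator_of_mem hy]
      rw [show (fun x => (Prod.snd ⁻¹' s).indicator c (x, y)) = fun x => c (x, y) from
        funext fun x => Set.indicator_of_mem (show (x, y) ∈ Prod.snd ⁻¹' s from hy) _]
      exact h y
    · rw [Set.indicator_of_notMem hy]
      rw [show (fun x => (Prod.snd ⁻¹' s).indicator c (x, y)) = fun _ => 0 from
        funext fun x => Set.indicator_of_notMem (show (x, y) ∉ Prod.snd ⁻¹' s from hy) _]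
      simp
  simp_rw [this]
  rw [lintegral_indicator hs]
  simp

/-- fst marginal of a product with density. -/
lemma em_fst {c : X × Y → ENNReal} (hcm : Measurable c) (β : Measure X) [SFinite β] :
    ((β.prod νs).withDensity c).fst = β.withDensity (fun x => ∫⁻ y, c (x, y) ∂νs) := by
  ext s hs
  rw [Measure.fst_apply hs, withDensity_apply _ (measurable_fst hs),
    ← lintegral_indicator (measurable_fst hs),
    lintegral_prod _ (hcm.indicator (measurable_fst hs)).aemeasurable,
    withDensity_apply _ hs, ← lintegral_indicator hs]
  refine lintegral_congr fun x => ?_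
  by_cases hx : x ∈ s
  · rw [Set.indicator_of_mem hx]
    exact lintegral_congr fun y => Set.indicator_of_mem (show (x, y) ∈ Prod.fst ⁻¹' s from hx) _
  · rw [Set.indicator_of_notMem hx]
    rw [show (fun y => (Prod.fst ⁻¹' s).indicator c (x, y)) = fun _ => 0 from
      funext fun y => Set.indicator_of_notMem (show (x, y) ∉ Prod.fst ⁻¹' s from hx) _]
    simp

/-- llr with respect to a withDensity measure. -/
lemma em_llr_withDensity {T : Y → ENNReal} (hT : Measurable T) (h0 : ∀ y, T y ≠ 0)
    (ht : ∀ y, T y ≠ ⊤) :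
    llr νs (νs.withDensity T) =ᵐ[νs] fun y => -Real.log (T y).toReal := by
  have h := Measure.rnDeriv_withDensity_right (μ := νs) (ν := νs) hT.aemeasurable
    (ae_of_all _ h0) (ae_of_all _ ht)
  filter_upwards [h, Measure.rnDeriv_self νs] with y hy hy2
  rw [llr, hy, hy2, mul_one, ENNReal.toReal_inv, Real.log_inv]

lemma em_lint_div_one {T : Y → ENNReal} (h0 : ∀ y, T y ≠ 0) (ht : ∀ y, T y ≠ ⊤)
    (hk_meas : Measurable (Function.uncurry k)) (β : Measure X)
    (hT : ∀ y, ∫⁻ x, ENNReal.ofReal (k x y) ∂β = T y) (y : Y) :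
    ∫⁻ x, ENNReal.ofReal (k x y) / T y ∂β = 1 := by
  simp_rw [ENNReal.div_eq_inv_mul]
  rw [lintegral_const_mul' _ _ (ENNReal.inv_ne_top.2 (h0 y)),
    hT y, ENNReal.inv_mul_cancel (h0 y) (ht y)]

/-- Step 2: the main inequality. -/
lemma em_step2 (hk_meas : Measurable (Function.uncurry k)) (hk_pos : ∀ x y, 0 < k x y)
    (hk_bdd : ∀ x y, k x y ≤ Mk) (hMk : 0 < Mk)
    (κ : ProbabilityTheory.Kernel X Y) [IsMarkovKernel κ]
    (hκ : ∀ x, κ x = νs.withDensity (fun y => ENNReal.ofReal (k x y)))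
    (q : Measure (X × Y)) [IsProbabilityMeasure q] (hsnd : q.snd = νs) :
    klDiv νs (νs.withDensity (fun y => ∫⁻ x, ENNReal.ofReal (k x y) ∂q.fst))
      ≤ klDiv q (q.fst ⊗ₘ κ) := by
  set β := q.fst with hβ
  set T : Y → ENNReal := fun y => ∫⁻ x, ENNReal.ofReal (k x y) ∂β with hTdef
  have hT : Measurable T := em_measT hk_meas β
  have h0 : ∀ y, T y ≠ 0 := fun y => (em_Tpos hk_meas hk_pos β y).ne'
  have htop : ∀ y, T y ≠ ⊤ := fun y => em_TneTop hk_bdd β y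
  set mq := νs.withDensity T with hmq
  set dens : X × Y → ENNReal := fun z => ENNReal.ofReal (k z.1 z.2) / T z.2 with hdensdef
  have hdens : Measurable dens :=
    (show Measurable (fun z : X × Y => ENNReal.ofReal (k z.1 z.2)) from
      hk_meas.ennreal_ofReal).div (hT.comp measurable_snd)
  set ρ := (β.prod νs).withDensity dens with hρdef
  have hρ_snd : ρ.snd = νs :=
    em_snd hdens β (fun y => em_lint_div_one h0 htop hk_meas β (fun _ => rfl) y)
  have hρ_prob : IsProbabilityMeasure ρ :=
    ⟨by rw [← Measure.snd_univ, hρ_snd]; simp⟩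
  have hR : β ⊗ₘ κ = ρ.withDensity (fun z => T z.2) := by
    have hmul := withDensity_mul (β.prod νs) hdens
      (show Measurable (fun z : X × Y => T z.2) from hT.comp measurable_snd)
    rw [em_compProd hk_meas κ hκ β, hρdef, ← hmul]
    congr 1
    funext z
    simp only [Pi.mul_apply]
    exact (ENNReal.div_mul_cancel (h0 z.2) (htop z.2)).symm
  by_cases hcase : q ≪ (β ⊗ₘ κ) ∧ Integrable (llr q (β ⊗ₘ κ)) q
  · obtain ⟨hq, hint⟩ := hcase
    have hqρ : q ≪ ρ := (hR ▸ hq).trans (withDensity_absolutelyContinuous ρ _)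
    have hrd : q.rnDeriv (β ⊗ₘ κ) =ᵐ[q] fun z => (T z.2)⁻¹ * q.rnDeriv ρ z := by
      rw [hR]
      exact hqρ.ae_le (Measure.rnDeriv_withDensity_right q ρ
        (hT.comp measurable_snd).aemeasurable
        (ae_of_all _ fun z => h0 z.2) (ae_of_all _ fun z => htop z.2))
    have hpos : ∀ᵐ z ∂q, 0 < q.rnDeriv ρ z := Measure.rnDeriv_pos hqρ
    have hlt : ∀ᵐ z ∂q, q.rnDeriv ρ z < ⊤ := hqρ.ae_le (Measure.rnDeriv_lt_top q ρ)
    set φ : X × Y → ℝ := fun z => -Real.log (T z.2).toReal with hφdef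
    have hφmeas : Measurable φ := ((hT.comp measurable_snd).ennreal_toReal.log).neg
    have key1 : llr q (β ⊗ₘ κ) =ᵐ[q] fun z => llr q ρ z + φ z := by
      filter_upwards [hrd, hpos, hlt] with z h1 h2 h3
      have hTr : 0 < (T z.2).toReal := ENNReal.toReal_pos (h0 z.2) (htop z.2)
      have hrr : 0 < (q.rnDeriv ρ z).toReal := ENNReal.toReal_pos h2.ne' h3.ne
      rw [llr, h1, ENNReal.toReal_mul, ENNReal.toReal_inv,
        Real.log_mul (by positivity) hrr.ne', Real.log_inv]
      simp only [llr, hφdef]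
      ring
    have hnegllr : ∀ᵐ z ∂q, -llr q ρ z ≤ (ρ.rnDeriv q z).toReal - 1 := by
      filter_upwards [neg_llr hqρ, Measure.rnDeriv_pos' hqρ, Measure.rnDeriv_lt_top ρ q]
        with z h1 h2 h3
      rw [Pi.neg_apply] at h1
      rw [h1, llr]
      exact Real.log_le_sub_one_of_pos (ENNReal.toReal_pos h2.ne' h3.ne)
    have hDint : Integrable (fun z => (ρ.rnDeriv q z).toReal) q :=
      Measure.integrable_toReal_rnDeriv
    have hφlow : ∀ z, -Real.log Mk ≤ φ z := by
      intro z
      have h1 : (T z.2).toReal ≤ Mk :=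
        ENNReal.toReal_le_of_le_ofReal hMk.le (em_Tle hk_bdd β z.2)
      have h2 : 0 < (T z.2).toReal := ENNReal.toReal_pos (h0 z.2) (htop z.2)
      simp only [hφdef, neg_le_neg_iff]
      exact Real.log_le_log h2 h1
    have hφup : ∀ᵐ z ∂q, φ z ≤ llr q (β ⊗ₘ κ) z + ((ρ.rnDeriv q z).toReal - 1) := by
      filter_upwards [key1, hnegllr] with z h1 h2
      have := h1
      nlinarith [h2]
    have hφint : Integrable φ q :=
      em_integrable_of_bounds hφmeas.aestronglyMeasurable
        (hint.add (hDint.sub (integrable_const 1))) (ae_of_all _ hφlow) hφup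
    -- transfer to νs
    have hmq_ac : νs ≪ mq := withDensity_absolutelyContinuous' hT.aemeasurable
      (ae_of_all _ h0)
    have hllrmq : llr νs mq =ᵐ[νs] fun y => -Real.log (T y).toReal :=
      em_llr_withDensity hT h0 htop
    have hmap : q.map Prod.snd = νs := hsnd
    have hsnd_ae : (fun z : X × Y => llr νs mq z.2) =ᵐ[q] φ := by
      have h' : ∀ᵐ y ∂(q.map Prod.snd), llr νs mq y = -Real.log (T y).toReal := by
        rw [hmap]; exact hllrmq
      filter_upwards [ae_of_ae_map measurable_snd.aemeasurable h'] with z hz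
      simpa [hφdef] using hz
    have hcomp : Integrable ((llr νs mq) ∘ Prod.snd) q := hφint.congr hsnd_ae.symm
    have hllrmq_int : Integrable (llr νs mq) νs := by
      have h1 : Integrable (llr νs mq) (q.map Prod.snd) :=
        (integrable_map_measure ((measurable_llr _ _).aestronglyMeasurable)
          measurable_snd.aemeasurable).2 hcomp
      exact hmap ▸ h1
    have hval : ∫ y, llr νs mq y ∂νs = ∫ z, φ z ∂q := by
      have h1 : ∫ y, llr νs mq y ∂(q.map Prod.snd) = ∫ z, llr νs mq z.2 ∂q :=
        integral_map measurable_snd.aemeasurable ((measurable_llr _ _).aestronglyMeasurable)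
      rw [hmap] at h1
      rw [h1]
      exact integral_congr_ae hsnd_ae
    -- main integral inequality
    have hsub : Integrable (fun z => llr q (β ⊗ₘ κ) z - φ z) q := hint.sub hφint
    have hsum : ∫ z, llr q (β ⊗ₘ κ) z ∂q
        = ∫ z, (llr q (β ⊗ₘ κ) z - φ z) ∂q + ∫ z, φ z ∂q := by
      rw [← integral_add hsub hφint]
      simp
    have hge : 0 ≤ ∫ z, (llr q (β ⊗ₘ κ) z - φ z) ∂q := by
      have hmono : ∀ᵐ z ∂q, -(llr q (β ⊗ₘ κ) z - φ z) ≤ (ρ.rnDeriv q z).toReal - 1 := by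
        filter_upwards [key1, hnegllr] with z h1 h2
        rw [h1]; linarith
      have h2 : ∫ z, -(llr q (β ⊗ₘ κ) z - φ z) ∂q
          ≤ ∫ z, ((ρ.rnDeriv q z).toReal - 1) ∂q :=
        integral_mono_ae hsub.neg (hDint.sub (integrable_const 1)) hmono
      rw [integral_neg] at h2
      have h3 : ∫ z, ((ρ.rnDeriv q z).toReal - 1) ∂q
          = ∫ z, (ρ.rnDeriv q z).toReal ∂q - 1 := by
        rw [integral_sub hDint (integrable_const 1)]
        simp
      have h4 : ∫ z, (ρ.rnDeriv q z).toReal ∂q ≤ 1 := by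
        have := Measure.setIntegral_toReal_rnDeriv_le (μ := ρ) (ν := q)
          (s := Set.univ) (by simp)
        rw [setIntegral_univ] at this
        simpa using this
      linarith
    have hfinal : ∫ y, llr νs mq y ∂νs ≤ ∫ z, llr q (β ⊗ₘ κ) z ∂q := by
      rw [hval, hsum]; linarith
    rw [klDiv, klDiv, if_pos ⟨hmq_ac, hllrmq_int⟩, if_pos ⟨hq, hint⟩]
    exact_mod_cast hfinal
  · have hTop : klDiv q (β ⊗ₘ κ) = ⊤ := by rw [klDiv, if_neg hcase]
    rw [hTop]
    exact le_top

section Var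

variable (hk_meas : Measurable (Function.uncurry k)) (hk_pos : ∀ x y, 0 < k x y)
  (hk_bdd : ∀ x y, k x y ≤ Mk) (hMk : 0 < Mk)
  (μstar : Measure X) [IsProbabilityMeasure μstar]

include hk_meas hk_pos hk_bdd hMk in
/-- per-set inequality from minimality -/
lemma em_setint_le
    (hmin : ∀ (μ : Measure X) [IsProbabilityMeasure μ],
      klDiv νs (νs.withDensity (fun y => ∫⁻ x, ENNReal.ofReal (k x y) ∂μstar))
        ≤ klDiv νs (νs.withDensity (fun y => ∫⁻ x, ENNReal.ofReal (k x y) ∂μ)))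
    (hint : Integrable
      (llr νs (νs.withDensity (fun y => ∫⁻ x, ENNReal.ofReal (k x y) ∂μstar))) νs)
    {A : Set X} (hA : MeasurableSet A) (hA0 : μstar A ≠ 0) :
    ∫⁻ x in A, (∫⁻ y, ENNReal.ofReal (k x y)
      / (∫⁻ x', ENNReal.ofReal (k x' y) ∂μstar) ∂νs) ∂μstar ≤ μstar A := by
  classical
  set T : Y → ENNReal := fun y => ∫⁻ x, ENNReal.ofReal (k x y) ∂μstar with hTdef
  have hT : Measurable T := em_measT hk_meas μstar
  have h0 : ∀ y, T y ≠ 0 := fun y => (em_Tpos hk_meas hk_pos μstar y).ne'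
  have htop : ∀ y, T y ≠ ⊤ := fun y => em_TneTop hk_bdd μstar y
  set c := μstar A with hc
  have hctop : c ≠ ⊤ := (measure_lt_top _ _).ne
  set μA : Measure X := c⁻¹ • μstar.restrict A with hμA
  haveI hμA_prob : IsProbabilityMeasure μA := by
    constructor
    rw [hμA, Measure.smul_apply, smul_eq_mul, Measure.restrict_apply_univ]
    exact ENNReal.inv_mul_cancel hA0 hctop
  set TA : Y → ENNReal := fun y => ∫⁻ x, ENNReal.ofReal (k x y) ∂μA with hTAdef
  have hTA : Measurable TA := em_measT hk_meas μA
  have hTA0 : ∀ y, TA y ≠ 0 := fun y => (em_Tpos hk_meas hk_pos μA y).ne'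
  have hTAtop : ∀ y, TA y ≠ ⊤ := fun y => em_TneTop hk_bdd μA y
  set u : Y → ℝ := fun y => (T y).toReal with hudef
  set v : Y → ℝ := fun y => (TA y).toReal with hvdef
  have hu_pos : ∀ y, 0 < u y := fun y => ENNReal.toReal_pos (h0 y) (htop y)
  have hv_pos : ∀ y, 0 < v y := fun y => ENNReal.toReal_pos (hTA0 y) (hTAtop y)
  have hu_meas : Measurable u := hT.ennreal_toReal
  have hv_meas : Measurable v := hTA.ennreal_toReal
  set r : Y → ℝ := fun y => v y / u y with hrdef
  have hr_meas : Measurable r := hv_meas.div hu_meas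
  have hr_pos : ∀ y, 0 < r y := fun y => div_pos (hv_pos y) (hu_pos y)
  set fφ : Y → ℝ := fun y => -Real.log (u y) with hfφdef
  have hllr : llr νs (νs.withDensity T) =ᵐ[νs] fφ := em_llr_withDensity hT h0 htop
  have hfφ_int : Integrable fφ νs := hint.congr hllr
  have hmq_ac : νs ≪ νs.withDensity T :=
    withDensity_absolutelyContinuous' hT.aemeasurable (ae_of_all _ h0)
  -- per-t inequality
  have key : ∀ t : ℝ, 0 < t → t ≤ 1/2 →
      Integrable (fun y => -Real.log (1 - t + t * r y)) νs ∧
      0 ≤ ∫ y, -Real.log (1 - t + t * r y) ∂νs := by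
    intro t ht0 ht2
    have ht1 : t < 1 := lt_of_le_of_lt ht2 (by norm_num)
    set μt : Measure X := ENNReal.ofReal (1 - t) • μstar + ENNReal.ofReal t • μA with hμt
    haveI hμt_prob : IsProbabilityMeasure μt := by
      constructor
      rw [hμt]
      simp only [Measure.add_apply, Measure.smul_apply, smul_eq_mul, measure_univ, mul_one]
      rw [← ENNReal.ofReal_add (by linarith) ht0.le]
      norm_num
    set Tt : Y → ENNReal := fun y => ∫⁻ x, ENNReal.ofReal (k x y) ∂μt with hTtdef
    have hTt : Measurable Tt := em_measT hk_meas μt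
    have hTt0 : ∀ y, Tt y ≠ 0 := fun y => (em_Tpos hk_meas hk_pos μt y).ne'
    have hTttop : ∀ y, Tt y ≠ ⊤ := fun y => em_TneTop hk_bdd μt y
    have hTt_eq : ∀ y, Tt y = ENNReal.ofReal (1 - t) * T y + ENNReal.ofReal t * TA y := by
      intro y
      rw [hTtdef]
      simp only [hμt, lintegral_add_measure, lintegral_smul_measure, smul_eq_mul]
      rfl
    have hTt_toReal : ∀ y, (Tt y).toReal = (1 - t) * u y + t * v y := by
      intro y
      rw [hTt_eq y, ENNReal.toReal_add, ENNReal.toReal_mul, ENNReal.toReal_mul,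
        ENNReal.toReal_ofReal (by linarith), ENNReal.toReal_ofReal ht0.le]
      · exact ENNReal.mul_ne_top ENNReal.ofReal_ne_top (htop y)
      · exact ENNReal.mul_ne_top ENNReal.ofReal_ne_top (hTAtop y)
    have hTt_pos : ∀ y, 0 < (Tt y).toReal := fun y => ENNReal.toReal_pos (hTt0 y) (hTttop y)
    set lt : Y → ℝ := fun y => -Real.log ((Tt y).toReal) with hltdef
    have hlt_meas : Measurable lt := (hTt.ennreal_toReal.log).neg
    -- bounds for lt
    have hlt_low : ∀ y, -Real.log Mk ≤ lt y := by
      intro y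
      have h1 : (Tt y).toReal ≤ Mk :=
        ENNReal.toReal_le_of_le_ofReal hMk.le (em_Tle hk_bdd μt y)
      simp only [hltdef, neg_le_neg_iff]
      exact Real.log_le_log (hTt_pos y) h1
    have hlt_up : ∀ y, lt y ≤ -Real.log (1 - t) + fφ y := by
      intro y
      have h1 : (1 - t) * u y ≤ (Tt y).toReal := by
        rw [hTt_toReal y]
        nlinarith [(hv_pos y).le, ht0.le]
      have h2 : 0 < (1 - t) * u y := mul_pos (by linarith) (hu_pos y)
      have h3 : Real.log ((1 - t) * u y) ≤ Real.log ((Tt y).toReal) :=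
        Real.log_le_log h2 h1
      rw [Real.log_mul (by linarith : (1:ℝ) - t ≠ 0) (hu_pos y).ne'] at h3
      simp only [hltdef, hfφdef]
      linarith
    have hlt_int : Integrable lt νs :=
      em_integrable_of_bounds hlt_meas.aestronglyMeasurable
        ((integrable_const _).add hfφ_int) (ae_of_all _ hlt_low) (ae_of_all _ hlt_up)
    have hllr_t : llr νs (νs.withDensity Tt) =ᵐ[νs] lt := em_llr_withDensity hTt hTt0 hTttop
    have hllr_t_int : Integrable (llr νs (νs.withDensity Tt)) νs := hlt_int.congr hllr_t.symm
    have hac_t : νs ≪ νs.withDensity Tt :=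
      withDensity_absolutelyContinuous' hTt.aemeasurable (ae_of_all _ hTt0)
    have hminval := hmin μt
    rw [klDiv, klDiv, if_pos ⟨hmq_ac, hint⟩, if_pos ⟨hac_t, hllr_t_int⟩] at hminval
    have hval : (∫ y, llr νs (νs.withDensity T) y ∂νs) ≤ ∫ y, llr νs (νs.withDensity Tt) y ∂νs :=
      by exact_mod_cast hminval
    rw [integral_congr_ae hllr, integral_congr_ae hllr_t] at hval
    -- identify lt - fφ with the goal function
    have hpt : ∀ y, -Real.log (1 - t + t * r y) = lt y - fφ y := by
      intro y
      have h1 : (Tt y).toReal = u y * (1 - t + t * r y) := by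
        rw [hTt_toReal y, hrdef]
        have hu : u y ≠ 0 := (hu_pos y).ne'
        field_simp
      have h2 : 0 < 1 - t + t * r y := by nlinarith [hr_pos y]
      simp only [hltdef, hfφdef]
      rw [h1, Real.log_mul (hu_pos y).ne' h2.ne']
      ring
    constructor
    · exact (hlt_int.sub hfφ_int).congr (ae_of_all _ fun y => (hpt y).symm)
    · have : ∫ y, -Real.log (1 - t + t * r y) ∂νs = ∫ y, (lt y - fφ y) ∂νs :=
        integral_congr_ae (ae_of_all _ hpt)
      rw [this, integral_sub hlt_int hfφ_int]
      linarith
  -- sequence of difference quotients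
  set s : ℕ → ℝ := fun n => ((n : ℝ) + 2)⁻¹ with hsdef
  have hs_pos : ∀ n, 0 < s n := fun n => by positivity
  have hs_half : ∀ n, s n ≤ 1/2 := by
    intro n
    have hn : (0:ℝ) ≤ (n : ℝ) := Nat.cast_nonneg n
    have h1 : ((n:ℝ) + 2)⁻¹ ≤ (2:ℝ)⁻¹ := by
      apply inv_anti₀ (by norm_num)
      linarith
    calc s n = ((n:ℝ) + 2)⁻¹ := by rw [hsdef]
      _ ≤ (2:ℝ)⁻¹ := h1
      _ = 1/2 := by norm_num
  set a : ℕ → Y → ℝ := fun n y => (s n)⁻¹ * (-Real.log (1 - s n + s n * r y)) with hadef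
  have ha_int : ∀ n, Integrable (a n) νs := fun n =>
    ((key (s n) (hs_pos n) (hs_half n)).1.const_mul _)
  have ha_nonneg : ∀ n, 0 ≤ ∫ y, a n y ∂νs := by
    intro n
    rw [hadef]
    simp only
    rw [integral_const_mul]
    exact mul_nonneg (by positivity) (key (s n) (hs_pos n) (hs_half n)).2
  have ha_le_two : ∀ n y, a n y ≤ 2 := by
    intro n y
    have h1 : 1 - s n ≤ 1 - s n + s n * r y := by nlinarith [hr_pos y, hs_pos n]
    have h2 : 0 < 1 - s n := by nlinarith [hs_half n]
    have h3 : -Real.log (1 - s n + s n * r y) ≤ -Real.log (1 - s n) := by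
      simp only [neg_le_neg_iff]
      exact Real.log_le_log h2 h1
    have h4 : -Real.log (1 - s n) ≤ s n / (1 - s n) := by
      have := Real.log_le_sub_one_of_pos (x := (1 - s n)⁻¹) (by positivity)
      rw [Real.log_inv] at this
      have heq : (1 - s n)⁻¹ - 1 = s n / (1 - s n) := by field_simp; ring
      linarith [heq ▸ this]
    have h5 : (s n)⁻¹ * (s n / (1 - s n)) = (1 - s n)⁻¹ := by
      field_simp
      exact div_self (hs_pos n).ne'
    have h6 : (1 - s n)⁻¹ ≤ 2 := by
      rw [inv_le_comm₀ (by linarith) (by norm_num)]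
      linarith [hs_half n]
    calc a n y ≤ (s n)⁻¹ * (s n / (1 - s n)) := by
          rw [hadef]
          exact mul_le_mul_of_nonneg_left (h3.trans h4) (by positivity)
      _ ≤ 2 := h5 ▸ h6
  -- pointwise limit
  have ha_tendsto : ∀ y, Filter.Tendsto (fun n => a n y) Filter.atTop (nhds (1 - r y)) := by
    intro y
    have hD : HasDerivAt (fun t : ℝ => -Real.log (1 - t + t * r y)) (1 - r y) 0 := by
      have h1 : HasDerivAt (fun t : ℝ => 1 - t + t * r y) (-1 + r y) 0 := by
        exact ((((hasDerivAt_id (0:ℝ)).const_sub 1)).add ((hasDerivAt_id (0:ℝ)).mul_const (r y))).congr_deriv (by ring)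
      have h2 : HasDerivAt (fun t : ℝ => Real.log (1 - t + t * r y))
          ((1 - (0:ℝ) + 0 * r y)⁻¹ * (-1 + r y)) 0 :=
        (Real.hasDerivAt_log (by norm_num)).comp 0 h1
      have h3 := h2.neg
      have h4 : -((1 - (0:ℝ) + 0 * r y)⁻¹ * (-1 + r y)) = 1 - r y := by
        norm_num
        try ring
      rw [← h4]
      exact h3
    have hslope := hasDerivAt_iff_tendsto_slope.1 hD
    have hs_tendsto : Filter.Tendsto s Filter.atTop (nhdsWithin 0 {x | x ≠ 0}) := by
      rw [tendsto_nhdsWithin_iff]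
      constructor
      · have h1 : Filter.Tendsto (fun n : ℕ => ((n : ℝ) + 2)) Filter.atTop Filter.atTop :=
          Filter.tendsto_atTop_add_const_right _ 2 tendsto_natCast_atTop_atTop
        exact h1.inv_tendsto_atTop
      · exact Filter.Eventually.of_forall fun n => (hs_pos n).ne'
    have hcomp := hslope.comp hs_tendsto
    have heq : (fun n => slope (fun t : ℝ => -Real.log (1 - t + t * r y)) 0 (s n))
        = fun n => a n y := by
      funext n
      rw [slope_def_field, hadef]
      simp only
      norm_num
      rw [div_eq_inv_mul]
      ring
    rwa [show ((fun t => slope (fun t : ℝ => -Real.log (1 - t + t * r y)) 0 t) ∘ s)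
      = fun n => a n y from heq ▸ rfl] at hcomp
  -- Fatou argument
  set b : ℕ → Y → ENNReal := fun n y => ENNReal.ofReal (2 - a n y) with hbdef
  have hb_meas : ∀ n, Measurable (b n) := by
    intro n
    apply Measurable.ennreal_ofReal
    apply Measurable.sub measurable_const
    exact ((((hr_meas.const_mul _).const_add _).log).neg).const_mul _
  have h_liminf : ∀ y, Filter.liminf (fun n => b n y) Filter.atTop
      = ENNReal.ofReal (1 + r y) := by
    intro y
    have h1 : Filter.Tendsto (fun n => b n y) Filter.atTop (nhds (ENNReal.ofReal (1 + r y))) := by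
      have h2 : Filter.Tendsto (fun n => 2 - a n y) Filter.atTop (nhds (2 - (1 - r y))) :=
        (tendsto_const_nhds).sub (ha_tendsto y)
      have h3 := (ENNReal.continuous_ofReal.tendsto _).comp h2
      convert h3 using 2
      congr 1; ring
    exact h1.liminf_eq
  have h_fatou := MeasureTheory.lintegral_liminf_le hb_meas (μ := νs) (u := Filter.atTop)
  have h_bnd : ∀ n, ∫⁻ y, b n y ∂νs ≤ ENNReal.ofReal 2 := by
    intro n
    have h1 : Integrable (fun y => 2 - a n y) νs := (integrable_const 2).sub (ha_int n)
    rw [hbdef]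
    simp only
    rw [← ofReal_integral_eq_lintegral_ofReal h1
      (ae_of_all _ fun y => by
        show (0:ℝ) ≤ 2 - a n y
        linarith [ha_le_two n y])]
    apply ENNReal.ofReal_le_ofReal
    rw [integral_sub (integrable_const 2) (ha_int n)]
    simp only [integral_const, measure_univ, probReal_univ, ENNReal.toReal_one, smul_eq_mul, one_mul]
    linarith [ha_nonneg n]
  have h_liminf_le : Filter.liminf (fun n => ∫⁻ y, b n y ∂νs) Filter.atTop ≤ ENNReal.ofReal 2 := by
    refine le_trans (Filter.liminf_le_liminf (Filter.Eventually.of_forall h_bnd)) ?_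
    simp [Filter.liminf_const]
  have h_main : ∫⁻ y, ENNReal.ofReal (1 + r y) ∂νs ≤ ENNReal.ofReal 2 := by
    calc ∫⁻ y, ENNReal.ofReal (1 + r y) ∂νs
        = ∫⁻ y, Filter.liminf (fun n => b n y) Filter.atTop ∂νs := by
          exact lintegral_congr fun y => (h_liminf y).symm
      _ ≤ Filter.liminf (fun n => ∫⁻ y, b n y ∂νs) Filter.atTop := h_fatou
      _ ≤ ENNReal.ofReal 2 := h_liminf_le
  have h_split : ∀ y, ENNReal.ofReal (1 + r y) = 1 + ENNReal.ofReal (r y) := by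
    intro y
    rw [ENNReal.ofReal_add (by norm_num) (hr_pos y).le]
    norm_num
  have h_r_le_one : ∫⁻ y, ENNReal.ofReal (r y) ∂νs ≤ 1 := by
    have h1 : ∫⁻ y, (1 + ENNReal.ofReal (r y)) ∂νs
        = 1 + ∫⁻ y, ENNReal.ofReal (r y) ∂νs := by
      rw [lintegral_add_left measurable_const]
      simp
    have h2 : (1 : ENNReal) + ∫⁻ y, ENNReal.ofReal (r y) ∂νs ≤ ENNReal.ofReal 2 := by
      rw [← h1]
      calc ∫⁻ y, (1 + ENNReal.ofReal (r y)) ∂νs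
          = ∫⁻ y, ENNReal.ofReal (1 + r y) ∂νs := lintegral_congr fun y => (h_split y).symm
        _ ≤ ENNReal.ofReal 2 := h_main
    have h3 : (ENNReal.ofReal 2 : ENNReal) = 1 + 1 := by norm_num
    rw [h3] at h2
    exact (ENNReal.add_le_add_iff_left (by norm_num)).1 h2
  -- identify ofReal (r y) with TA y / T y
  have h_ofReal_r : ∀ y, ENNReal.ofReal (r y) = TA y / T y := by
    intro y
    rw [hrdef]
    simp only
    rw [ENNReal.ofReal_div_of_pos (hu_pos y), hudef, hvdef,
      ENNReal.ofReal_toReal (hTAtop y), ENNReal.ofReal_toReal (htop y)]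
  have h_TA_T : ∫⁻ y, TA y / T y ∂νs ≤ 1 := by
    calc ∫⁻ y, TA y / T y ∂νs = ∫⁻ y, ENNReal.ofReal (r y) ∂νs :=
          lintegral_congr fun y => (h_ofReal_r y).symm
      _ ≤ 1 := h_r_le_one
  -- Fubini
  have h_fub : ∫⁻ y, TA y / T y ∂νs
      = ∫⁻ x, (∫⁻ y, ENNReal.ofReal (k x y) / T y ∂νs) ∂μA := by
    have h1 : ∀ y, TA y / T y = ∫⁻ x, ENNReal.ofReal (k x y) * (T y)⁻¹ ∂μA := by
      intro y
      rw [div_eq_mul_inv, hTAdef]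
      exact (lintegral_mul_const' _ _ (ENNReal.inv_ne_top.2 (h0 y))).symm
    have h2 : AEMeasurable (Function.uncurry fun x y => ENNReal.ofReal (k x y) * (T y)⁻¹)
        (μA.prod νs) := by
      apply Measurable.aemeasurable
      exact (show Measurable fun z : X × Y => ENNReal.ofReal (k z.1 z.2) from
        hk_meas.ennreal_ofReal).mul ((hT.comp measurable_snd).inv)
    calc ∫⁻ y, TA y / T y ∂νs
        = ∫⁻ y, ∫⁻ x, ENNReal.ofReal (k x y) * (T y)⁻¹ ∂μA ∂νs :=
          lintegral_congr fun y => h1 y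
      _ = ∫⁻ x, ∫⁻ y, ENNReal.ofReal (k x y) * (T y)⁻¹ ∂νs ∂μA :=
          (lintegral_lintegral_swap h2).symm
      _ = ∫⁻ x, (∫⁻ y, ENNReal.ofReal (k x y) / T y ∂νs) ∂μA := by
          refine lintegral_congr fun x => lintegral_congr fun y => ?_
          rw [div_eq_mul_inv]
  -- unfold μA
  have h_unfold : ∫⁻ x, (∫⁻ y, ENNReal.ofReal (k x y) / T y ∂νs) ∂μA
      = c⁻¹ * ∫⁻ x in A, (∫⁻ y, ENNReal.ofReal (k x y) / T y ∂νs) ∂μstar := by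
    rw [hμA, lintegral_smul_measure, smul_eq_mul]
  have h_final : c⁻¹ * ∫⁻ x in A, (∫⁻ y, ENNReal.ofReal (k x y) / T y ∂νs) ∂μstar ≤ 1 := by
    rw [← h_unfold, ← h_fub]
    exact h_TA_T
  have := mul_le_mul_right h_final c
  rwa [← mul_assoc, ENNReal.mul_inv_cancel hA0 hctop, one_mul, mul_one] at this

include hk_meas hk_pos hk_bdd hMk in
lemma em_g_eq_one
    (hmin : ∀ (μ : Measure X) [IsProbabilityMeasure μ],
      klDiv νs (νs.withDensity (fun y => ∫⁻ x, ENNReal.ofReal (k x y) ∂μstar))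
        ≤ klDiv νs (νs.withDensity (fun y => ∫⁻ x, ENNReal.ofReal (k x y) ∂μ)))
    (hint : Integrable
      (llr νs (νs.withDensity (fun y => ∫⁻ x, ENNReal.ofReal (k x y) ∂μstar))) νs) :
    (fun x => ∫⁻ y, ENNReal.ofReal (k x y)
      / (∫⁻ x', ENNReal.ofReal (k x' y) ∂μstar) ∂νs) =ᵐ[μstar] (fun _ => 1) := by
  set T : Y → ENNReal := fun y => ∫⁻ x, ENNReal.ofReal (k x y) ∂μstar with hTdef
  have hT : Measurable T := em_measT hk_meas μstar
  have h0 : ∀ y, T y ≠ 0 := fun y => (em_Tpos hk_meas hk_pos μstar y).ne'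
  have htop : ∀ y, T y ≠ ⊤ := fun y => em_TneTop hk_bdd μstar y
  set g : X → ENNReal := fun x => ∫⁻ y, ENNReal.ofReal (k x y) / T y ∂νs with hgdef
  have hdens : Measurable (fun z : X × Y => ENNReal.ofReal (k z.1 z.2) / T z.2) :=
    (show Measurable (fun z : X × Y => ENNReal.ofReal (k z.1 z.2)) from
      hk_meas.ennreal_ofReal).div (hT.comp measurable_snd)
  have hg_meas : Measurable g := by
    rw [hgdef]
    exact Measurable.lintegral_prod_right' (f := fun z : X × Y =>
      ENNReal.ofReal (k z.1 z.2) / T z.2) hdens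
  have hle : g ≤ᵐ[μstar] fun _ => 1 := by
    apply ae_le_of_forall_setLIntegral_le_of_sigmaFinite hg_meas
    intro s hs hfin
    rw [setLIntegral_one]
    by_cases hs0 : μstar s = 0
    · rw [setLIntegral_measure_zero _ _ hs0]
      exact bot_le
    · exact em_setint_le hk_meas hk_pos hk_bdd hMk μstar hmin hint hs hs0
  have hswap : ∫⁻ x, g x ∂μstar = ∫⁻ y, ∫⁻ x, ENNReal.ofReal (k x y) / T y ∂μstar ∂νs := by
    rw [hgdef]
    exact lintegral_lintegral_swap (hdens.aemeasurable)
  have hint1 : ∫⁻ x, g x ∂μstar = 1 := by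
    rw [hswap]
    have h1 : ∀ y, ∫⁻ x, ENNReal.ofReal (k x y) / T y ∂μstar = 1 :=
      fun y => em_lint_div_one h0 htop hk_meas μstar (fun _ => rfl) y
    simp_rw [h1]
    simp
  have hsub : ∫⁻ x, ((fun _ => (1 : ENNReal)) x - g x) ∂μstar = 0 := by
    rw [lintegral_sub hg_meas (by rw [hint1]; exact ENNReal.one_ne_top) hle, hint1]
    simp
  have hzero := (lintegral_eq_zero_iff (measurable_const.sub hg_meas)).1 hsub
  filter_upwards [hzero, hle] with x h1 h2
  have h3 : (1 : ENNReal) - g x = 0 := h1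
  exact le_antisymm h2 (tsub_eq_zero_iff_le.1 h3)

end Var

end Aux


/-- Optimal value and minimizer of the latent-EM objective: let
`κ(x, dy) = k(x,y) νs(dy)` be a Markov kernel with `k` bounded, measurable and positive,
`T_K μ = νs.withDensity (∫ k(x,·) dμ)` the mixture map, and
`F(π) = KL(π | p_X π ⊗ₘ κ)` on couplings with second marginal `νs`. If `μstar` minimizes
`μ ↦ KL(νs | T_K μ)` over probability measures on `X` and `νs ≪ T_K μstar`, then
`pstar(dx,dy) = μstar(dx) k(x,y) νs(dy)/(T_K μstar)(dy)` has second marginal `νs`,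
minimizes `F` over couplings with second marginal `νs`, and `F(pstar) = KL(νs | T_K μstar)`. -/
theorem latent_em_minimizer
    {X Y : Type*} [MeasurableSpace X] [MeasurableSpace Y] [Nonempty X] [Nonempty Y]
    (νs : Measure Y) [IsProbabilityMeasure νs]
    (k : X → Y → ℝ) (hk_meas : Measurable (Function.uncurry k))
    (hk_pos : ∀ x y, 0 < k x y)
    (Mk : ℝ) (hk_bdd : ∀ x y, k x y ≤ Mk)
    (κ : ProbabilityTheory.Kernel X Y) [IsMarkovKernel κ]
    (hκ : ∀ x, κ x = νs.withDensity (fun y => ENNReal.ofReal (k x y)))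
    (μstar : Measure X) [IsProbabilityMeasure μstar]
    (hμstar_min : ∀ (μ : Measure X) [IsProbabilityMeasure μ],
      klDiv νs (νs.withDensity (fun y => ∫⁻ x, ENNReal.ofReal (k x y) ∂μstar))
        ≤ klDiv νs (νs.withDensity (fun y => ∫⁻ x, ENNReal.ofReal (k x y) ∂μ)))
    (habs : νs ≪ νs.withDensity (fun y => ∫⁻ x, ENNReal.ofReal (k x y) ∂μstar))
    (pstar : Measure (X × Y))
    (hpstar : pstar = (μstar.prod νs).withDensity
      (fun z => ENNReal.ofReal (k z.1 z.2) / ∫⁻ x, ENNReal.ofReal (k x z.2) ∂μstar)) :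
    IsProbabilityMeasure pstar ∧
    pstar.snd = νs ∧
    (∀ (q : Measure (X × Y)) [IsProbabilityMeasure q], q.snd = νs →
      klDiv pstar (pstar.fst ⊗ₘ κ) ≤ klDiv q (q.fst ⊗ₘ κ)) ∧
    klDiv pstar (pstar.fst ⊗ₘ κ)
      = klDiv νs (νs.withDensity (fun y => ∫⁻ x, ENNReal.ofReal (k x y) ∂μstar)) := by
  have hMk : 0 < Mk :=
    (hk_pos (Classical.arbitrary X) (Classical.arbitrary Y)).trans_le
      (hk_bdd (Classical.arbitrary X) (Classical.arbitrary Y))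
  set T : Y → ENNReal := fun y => ∫⁻ x, ENNReal.ofReal (k x y) ∂μstar with hTdef
  have hTfold : ∀ y, (∫⁻ x, ENNReal.ofReal (k x y) ∂μstar) = T y := fun _ => rfl
  have hT : Measurable T := em_measT hk_meas μstar
  have h0 : ∀ y, T y ≠ 0 := fun y => (em_Tpos hk_meas hk_pos μstar y).ne'
  have htop : ∀ y, T y ≠ ⊤ := fun y => em_TneTop hk_bdd μstar y
  have hdens : Measurable (fun z : X × Y => ENNReal.ofReal (k z.1 z.2) / T z.2) :=
    (show Measurable (fun z : X × Y => ENNReal.ofReal (k z.1 z.2)) from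
      hk_meas.ennreal_ofReal).div (hT.comp measurable_snd)
  have hpstar' : pstar = (μstar.prod νs).withDensity
      (fun z => ENNReal.ofReal (k z.1 z.2) / T z.2) := by
    rw [hpstar]
  have hsnd : pstar.snd = νs := by
    rw [hpstar']
    exact em_snd hdens μstar (fun y => em_lint_div_one h0 htop hk_meas μstar (fun _ => rfl) y)
  haveI hprob : IsProbabilityMeasure pstar :=
    ⟨by rw [← Measure.snd_univ, hsnd]; exact measure_univ⟩
  have hkey : klDiv pstar (pstar.fst ⊗ₘ κ)
      = klDiv νs (νs.withDensity T) := by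
    by_cases hint : Integrable (llr νs (νs.withDensity T)) νs
    · -- the integrable case
      have hgeq := em_g_eq_one hk_meas hk_pos hk_bdd hMk μstar hμstar_min hint
      have hfst : pstar.fst = μstar := by
        rw [hpstar', em_fst hdens μstar]
        have h5 : μstar.withDensity
            (fun x => ∫⁻ y, ENNReal.ofReal (k x y) / T y ∂νs)
            = μstar.withDensity (fun _ => 1) := withDensity_congr_ae hgeq
        rw [h5, show (fun _ : X => (1:ENNReal)) = 1 from rfl, withDensity_one]
      have hRp : pstar.fst ⊗ₘ κ = pstar.withDensity (fun z => T z.2) := by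
        have hmul := withDensity_mul (μstar.prod νs) hdens
          (show Measurable (fun z : X × Y => T z.2) from hT.comp measurable_snd)
        rw [hfst, em_compProd hk_meas κ hκ μstar, hpstar', ← hmul]
        congr 1
        funext z
        simp only [Pi.mul_apply]
        exact (ENNReal.div_mul_cancel (h0 z.2) (htop z.2)).symm
      have hac : pstar ≪ pstar.fst ⊗ₘ κ := by
        rw [hRp]
        exact withDensity_absolutelyContinuous' ((hT.comp measurable_snd).aemeasurable)
          (ae_of_all _ fun z => h0 z.2)
      have hrd : pstar.rnDeriv (pstar.fst ⊗ₘ κ) =ᵐ[pstar] fun z => (T z.2)⁻¹ := by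
        rw [hRp]
        have h1 := Measure.rnDeriv_withDensity_right pstar pstar
          ((show Measurable (fun z : X × Y => T z.2) from hT.comp measurable_snd).aemeasurable)
          (ae_of_all _ fun z => h0 z.2) (ae_of_all _ fun z => htop z.2)
        have h2 : pstar ≪ pstar.withDensity (fun z => T z.2) :=
          withDensity_absolutelyContinuous'
            ((show Measurable (fun z : X × Y => T z.2) from hT.comp measurable_snd).aemeasurable)
            (ae_of_all _ fun z => h0 z.2)
        filter_upwards [h1, Measure.rnDeriv_self pstar] with z hz1 hz2
        rw [hz1, hz2, mul_one]
      set fφ : Y → ℝ := fun y => -Real.log (T y).toReal with hfφdef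
      have hllr_p : llr pstar (pstar.fst ⊗ₘ κ) =ᵐ[pstar] fun z => fφ z.2 := by
        filter_upwards [hrd] with z hz
        rw [llr, hz, ENNReal.toReal_inv, Real.log_inv]
      have hllr_ν : llr νs (νs.withDensity T) =ᵐ[νs] fφ := em_llr_withDensity hT h0 htop
      have hmap : pstar.map Prod.snd = νs := hsnd
      have hfφ_meas : Measurable fφ := (hT.ennreal_toReal.log).neg
      have hfφ_int : Integrable fφ νs := hint.congr hllr_ν
      have hcomp_int : Integrable (fφ ∘ Prod.snd) pstar := by
        have h1 : Integrable fφ (pstar.map Prod.snd) := by rw [hmap]; exact hfφ_int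
        exact (integrable_map_measure hfφ_meas.aestronglyMeasurable
          measurable_snd.aemeasurable).1 h1
      have hint_p : Integrable (llr pstar (pstar.fst ⊗ₘ κ)) pstar :=
        hcomp_int.congr hllr_p.symm
      have hval : ∫ z, llr pstar (pstar.fst ⊗ₘ κ) z ∂pstar
          = ∫ y, llr νs (νs.withDensity T) y ∂νs := by
        rw [integral_congr_ae hllr_p, integral_congr_ae hllr_ν]
        have h1 : ∫ y, fφ y ∂(pstar.map Prod.snd) = ∫ z, fφ z.2 ∂pstar :=
          integral_map measurable_snd.aemeasurable hfφ_meas.aestronglyMeasurable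
        rw [hmap] at h1
        rw [← h1]
      rw [klDiv, klDiv, if_pos ⟨hac, hint_p⟩, if_pos ⟨habs, hint⟩, hval]
    · -- non-integrable case: both sides are ⊤
      have hrhs : klDiv νs (νs.withDensity T) = ⊤ := by
        rw [klDiv, if_neg (fun h => hint h.2)]
      rw [hrhs]
      rw [eq_top_iff]
      calc (⊤ : EReal) = klDiv νs (νs.withDensity T) := hrhs.symm
        _ ≤ klDiv νs (νs.withDensity (fun y => ∫⁻ x, ENNReal.ofReal (k x y) ∂pstar.fst)) :=
            hμstar_min pstar.fst
        _ ≤ klDiv pstar (pstar.fst ⊗ₘ κ) :=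
            em_step2 hk_meas hk_pos hk_bdd hMk κ hκ pstar hsnd
  refine ⟨hprob, hsnd, ?_, hkey⟩
  intro q hq hqsnd
  calc klDiv pstar (pstar.fst ⊗ₘ κ) = klDiv νs (νs.withDensity T) := hkey
    _ ≤ klDiv νs (νs.withDensity (fun y => ∫⁻ x, ENNReal.ofReal (k x y) ∂q.fst)) :=
        hμstar_min q.fst
    _ ≤ klDiv q (q.fst ⊗ₘ κ) := em_step2 hk_meas hk_pos hk_bdd hMk κ hκ q hqsnd
end
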